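/- arXiv:2211.17155 — 2 statements merged into one kernel-verified Lean document; each statement's English description precedes it below -/
import Mathlib

section
/- Power transform CN inequality: Let (M,d) be a global NPC space, let γ:[0,1] → M be a geodesic, and let α ∈ [1,2]. Then for any δ > 0, any t ∈ [0,1], and any z ∈ M, d(γ_t,z)^α ≤ (1+δ)^{1−α/2}[(1−t)^{α/2} d(γ₀,z)^α + t^{α/2} d(γ₁,z)^α] − δ^{1−α/2}[t(1−t) d(γ₀,γ₁)²]^{α/2}. -/
open Set

/-- A Polish metric space is a (global) NPC space if midpoints satisfying the NPC
inequality always exist. -/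
def IsNPC (M : Type*) [MetricSpace M] : Prop :=
  ∀ x₀ x₁ : M, ∃ y : M, ∀ z : M,
    dist z y ^ 2 ≤
      (1 / 2) * dist z x₀ ^ 2 + (1 / 2) * dist z x₁ ^ 2 - (1 / 4) * dist x₀ x₁ ^ 2

/-- A geodesic `γ : [0,1] → M` (as a map on `ℝ`, constrained on `[0,1]`). -/
def IsGeodesic {M : Type*} [MetricSpace M] (γ : ℝ → M) : Prop :=
  ∀ s ∈ Set.Icc (0 : ℝ) 1, ∀ t ∈ Set.Icc (0 : ℝ) 1,
    dist (γ s) (γ t) = |s - t| * dist (γ 0) (γ 1)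

lemma geodesic_midpoint_cn {M : Type*} [MetricSpace M] (hM : IsNPC M) (γ : ℝ → M)
    (hγ : IsGeodesic γ) {s u : ℝ} (hs : s ∈ Icc (0:ℝ) 1) (hu : u ∈ Icc (0:ℝ) 1)
    (z : M) :
    dist (γ ((s+u)/2)) z ^ 2 ≤ (1/2) * dist (γ s) z ^ 2 + (1/2) * dist (γ u) z ^ 2
      - (1/4) * dist (γ s) (γ u) ^ 2 := by
  obtain ⟨y, hy⟩ := hM (γ s) (γ u)
  have hm : (s+u)/2 ∈ Icc (0:ℝ) 1 := ⟨by linarith [hs.1, hu.1], by linarith [hs.2, hu.2]⟩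
  have h2 := hγ ((s+u)/2) hm s hs
  have h3 := hγ ((s+u)/2) hm u hu
  have h4 := hγ s hs u hu
  have e2 : |(s+u)/2 - s| = |s - u|/2 := by
    rw [show (s+u)/2 - s = -((s-u)/2) by ring, abs_neg, abs_div, abs_two]
  have e3 : |(s+u)/2 - u| = |s - u|/2 := by
    rw [show (s+u)/2 - u = (s-u)/2 by ring, abs_div, abs_two]
  rw [e2] at h2; rw [e3] at h3
  have heq : γ ((s+u)/2) = y := by
    have h1 := hy (γ ((s+u)/2))
    rw [h2, h3, h4] at h1
    have h0 : dist (γ ((s+u)/2)) y ^ 2 ≤ 0 := by nlinarith [h1]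
    exact dist_eq_zero.mp ((pow_eq_zero_iff two_ne_zero).mp
      (le_antisymm h0 (sq_nonneg _)))
  have h1 := hy z
  rw [← heq, dist_comm z (γ ((s+u)/2)), dist_comm z (γ s), dist_comm z (γ u)] at h1
  exact h1


lemma midpoint_convex_nonpos {h : ℝ → ℝ}
    (hc : ContinuousOn h (Icc (0:ℝ) 1))
    (hmid : ∀ s ∈ Icc (0:ℝ) 1, ∀ u ∈ Icc (0:ℝ) 1, h ((s+u)/2) ≤ (h s + h u)/2)
    (h0 : h 0 ≤ 0) (h1 : h 1 ≤ 0) {t : ℝ} (ht : t ∈ Icc (0:ℝ) 1) : h t ≤ 0 := by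
  obtain ⟨t0, ht0, hmax⟩ := isCompact_Icc.exists_isMaxOn (nonempty_Icc.mpr zero_le_one) hc
  by_contra hcon
  push_neg at hcon
  have hK : 0 < h t0 := lt_of_lt_of_le hcon (hmax ht)
  set A : Set ℝ := Icc (0:ℝ) 1 ∩ h ⁻¹' {h t0} with hA
  have hclosed : IsClosed A := hc.preimage_isClosed_of_isClosed isClosed_Icc isClosed_singleton
  have hne : A.Nonempty := ⟨t0, ht0, rfl⟩
  have hbdd : BddBelow A := ⟨0, fun x hx => hx.1.1⟩
  have hs0 : sInf A ∈ A := hclosed.csInf_mem hne hbdd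
  set s0 := sInf A with hs0def
  have hs0I : s0 ∈ Icc (0:ℝ) 1 := hs0.1
  have hs0v : h s0 = h t0 := hs0.2
  have hs0pos : 0 < s0 := by
    rcases lt_or_eq_of_le hs0I.1 with h' | h'
    · exact h'
    · exfalso; rw [← h'] at hs0v; linarith
  have hs0lt : s0 < 1 := by
    rcases lt_or_eq_of_le hs0I.2 with h' | h'
    · exact h'
    · exfalso; rw [h'] at hs0v; linarith
  set ε := min s0 (1 - s0) with hε
  have hεpos : 0 < ε := lt_min hs0pos (by linarith)
  have hεle1 : ε ≤ s0 := by rw [hε]; exact min_le_left _ _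
  have hεle2 : ε ≤ 1 - s0 := by rw [hε]; exact min_le_right _ _
  have hla : s0 - ε ∈ Icc (0:ℝ) 1 := ⟨by linarith, by linarith [hεpos]⟩
  have hlb : s0 + ε ∈ Icc (0:ℝ) 1 := ⟨by linarith [hεpos], by linarith⟩
  have hmid' := hmid (s0 - ε) hla (s0 + ε) hlb
  rw [show (s0 - ε + (s0 + ε))/2 = s0 by ring] at hmid'
  have hub : h (s0 + ε) ≤ h t0 := hmax hlb
  have hlo : h t0 ≤ h (s0 - ε) := by rw [← hs0v] at hub ⊢; linarith
  have : s0 - ε ∈ A := ⟨hla, le_antisymm (hmax hla) hlo⟩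
  have := csInf_le hbdd this
  linarith

lemma geodesic_cn {M : Type*} [MetricSpace M] (γ : ℝ → M) (hγ : IsGeodesic γ)
    (cn : ∀ s ∈ Icc (0:ℝ) 1, ∀ u ∈ Icc (0:ℝ) 1, ∀ z : M,
      dist (γ ((s+u)/2)) z ^ 2 ≤ (1/2) * dist (γ s) z ^ 2 + (1/2) * dist (γ u) z ^ 2
        - (1/4) * dist (γ s) (γ u) ^ 2)
    {t : ℝ} (ht : t ∈ Icc (0:ℝ) 1) (z : M) :
    dist (γ t) z ^ 2 ≤ (1 - t) * dist (γ 0) z ^ 2 + t * dist (γ 1) z ^ 2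
      - t * (1 - t) * dist (γ 0) (γ 1) ^ 2 := by
  set D := dist (γ 0) (γ 1) with hD
  set q : ℝ → ℝ := fun r => (1 - r) * dist (γ 0) z ^ 2 + r * dist (γ 1) z ^ 2
      - r * (1 - r) * D ^ 2 with hq
  set h : ℝ → ℝ := fun r => dist (γ r) z ^ 2 - q r with hh
  have hcγ : ContinuousOn γ (Icc (0:ℝ) 1) := by
    refine (LipschitzOnWith.of_dist_le_mul (K := Real.toNNReal D) ?_).continuousOn
    intro x hx y hy
    rw [hγ x hx y hy, Real.coe_toNNReal D dist_nonneg, Real.dist_eq, mul_comm]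
  have hc : ContinuousOn h (Icc (0:ℝ) 1) := by
    apply ContinuousOn.sub
    · exact (((continuous_id.dist continuous_const).comp_continuousOn hcγ)).pow 2
    · fun_prop
  have hmid : ∀ s ∈ Icc (0:ℝ) 1, ∀ u ∈ Icc (0:ℝ) 1, h ((s+u)/2) ≤ (h s + h u)/2 := by
    intro s hs u hu
    have hcn := cn s hs u hu z
    have h4 : dist (γ s) (γ u) ^ 2 = (s - u) ^ 2 * D ^ 2 := by
      rw [hγ s hs u hu, mul_pow, sq_abs]
    rw [h4] at hcn
    simp only [hh, hq]
    nlinarith [hcn]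
  have h0 : h 0 ≤ 0 := by simp [hh, hq]
  have h1 : h 1 ≤ 0 := by simp [hh, hq]
  have := midpoint_convex_nonpos hc hmid h0 h1 ht
  simp only [hh, hq] at this
  linarith

 -- subadditivity of rpow for p ∈ [0,1]
lemma rpow_add_le_add_rpow' {x y p : ℝ} (hx : 0 ≤ x) (hy : 0 ≤ y)
    (hp : 0 ≤ p) (hp1 : p ≤ 1) : (x + y) ^ p ≤ x ^ p + y ^ p := by
  have h := NNReal.rpow_add_le_add_rpow x.toNNReal y.toNNReal hp hp1
  have h' := NNReal.coe_le_coe.2 h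
  push_cast at h'
  rwa [Real.coe_toNNReal x hx, Real.coe_toNNReal y hy] at h'

-- Hölder-type key inequality
lemma key_holder {X c δ p : ℝ} (hX : 0 ≤ X) (hc : 0 ≤ c) (hδ : 0 < δ)
    (hp0 : 0 < p) (hp1 : p ≤ 1) :
    X ^ p + δ ^ (1 - p) * c ^ p ≤ (1 + δ) ^ (1 - p) * (X + c) ^ p := by
  rcases eq_or_lt_of_le (add_nonneg hX hc) with hS | hS
  · have hX0 : X = 0 := by linarith
    have hc0 : c = 0 := by linarith
    simp [hX0, hc0, Real.zero_rpow (ne_of_gt hp0)]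
  · set S := X + c with hSdef
    clear_value S
    have h1δ : (0:ℝ) < 1 + δ := by linarith
    have hw : p + (1 - p) = 1 := by ring
    have g1 := Real.geom_mean_le_arith_mean2_weighted (le_of_lt hp0) (by linarith : (0:ℝ) ≤ 1 - p)
      hX (by positivity : (0:ℝ) ≤ S / (1 + δ)) hw
    have g2 := Real.geom_mean_le_arith_mean2_weighted (le_of_lt hp0) (by linarith : (0:ℝ) ≤ 1 - p)
      hc (by positivity : (0:ℝ) ≤ δ * (S / (1 + δ))) hw
    have e2 : (δ * (S / (1 + δ))) ^ (1 - p) = δ ^ (1 - p) * (S / (1 + δ)) ^ (1 - p) :=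
      Real.mul_rpow (le_of_lt hδ) (by positivity)
    rw [e2] at g2
    -- sum:
    have hsum : (X ^ p + δ ^ (1 - p) * c ^ p) * (S / (1 + δ)) ^ (1 - p) ≤ S := by
      have : X ^ p * (S / (1 + δ)) ^ (1 - p) + c ^ p * (δ ^ (1 - p) * (S / (1 + δ)) ^ (1 - p))
          ≤ p * X + (1 - p) * (S / (1 + δ)) + (p * c + (1 - p) * (δ * (S / (1 + δ)))) :=
        add_le_add g1 g2
      have hrhs : p * X + (1 - p) * (S / (1 + δ)) + (p * c + (1 - p) * (δ * (S / (1 + δ)))) = S := by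
        rw [hSdef]
        field_simp
        ring
      rw [hrhs] at this
      nlinarith [this]
    have hA : (S / (1 + δ)) ^ (1 - p) = S ^ (1 - p) / (1 + δ) ^ (1 - p) :=
      Real.div_rpow (le_of_lt hS) (le_of_lt h1δ) _
    have hS1p : (0:ℝ) < S ^ (1 - p) := Real.rpow_pos_of_pos hS _
    have h1δ1p : (0:ℝ) < (1 + δ) ^ (1 - p) := Real.rpow_pos_of_pos h1δ _
    have hSsplit : S ^ (1 - p) * S ^ p = S := by
      rw [← Real.rpow_add hS]; norm_num
    rw [hA] at hsum
    have h2 := mul_le_mul_of_nonneg_right hsum (le_of_lt h1δ1p)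
    have e5 : (X ^ p + δ ^ (1 - p) * c ^ p) * (S ^ (1 - p) / (1 + δ) ^ (1 - p)) * (1 + δ) ^ (1 - p)
        = (X ^ p + δ ^ (1 - p) * c ^ p) * S ^ (1 - p) := by
      field_simp
    rw [e5] at h2
    have e4 : S * (1 + δ) ^ (1 - p) = ((1 + δ) ^ (1 - p) * S ^ p) * S ^ (1 - p) := by
      linear_combination (-(1 + δ) ^ (1 - p)) * hSsplit
    rw [e4] at h2
    exact le_of_mul_le_mul_right h2 hS1p


/-- Power transform CN inequality. -/
theorem stmt_2
    {M : Type*} [MetricSpace M] [CompleteSpace M] [TopologicalSpace.SeparableSpace M]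
    (hM : IsNPC M)
    (γ : ℝ → M) (hγ : IsGeodesic γ)
    (α : ℝ) (hα : α ∈ Set.Icc (1 : ℝ) 2)
    (δ : ℝ) (hδ : 0 < δ) (t : ℝ) (ht : t ∈ Set.Icc (0 : ℝ) 1) (z : M) :
    dist (γ t) z ^ α ≤
      (1 + δ) ^ (1 - α / 2) *
        ((1 - t) ^ (α / 2) * dist (γ 0) z ^ α + t ^ (α / 2) * dist (γ 1) z ^ α) -
      δ ^ (1 - α / 2) * (t * (1 - t) * dist (γ 0) (γ 1) ^ 2) ^ (α / 2) := by
  set p := α / 2 with hp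
  have hp0 : 0 < p := by rw [hp]; linarith [hα.1]
  have hp1 : p ≤ 1 := by rw [hp]; linarith [hα.2]
  have ht0 : 0 ≤ t := ht.1
  have ht1 : t ≤ 1 := ht.2
  set X := dist (γ t) z ^ 2 with hX
  set c := t * (1 - t) * dist (γ 0) (γ 1) ^ 2 with hc
  set S := (1 - t) * dist (γ 0) z ^ 2 + t * dist (γ 1) z ^ 2 with hS
  have hXnonneg : 0 ≤ X := sq_nonneg _
  have hcnonneg : 0 ≤ c := by
    rw [hc]; exact mul_nonneg (mul_nonneg ht0 (by linarith)) (sq_nonneg _)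
  have hcn := geodesic_cn γ hγ (fun s hs u hu w => geodesic_midpoint_cn hM γ hγ hs hu w) ht z
  have hXc : X + c ≤ S := by rw [hX, hc, hS]; linarith
  have hSnonneg : 0 ≤ S := le_trans (add_nonneg hXnonneg hcnonneg) hXc
  -- key Hölder step
  have step1 : X ^ p + δ ^ (1 - p) * c ^ p ≤ (1 + δ) ^ (1 - p) * (X + c) ^ p :=
    key_holder hXnonneg hcnonneg hδ hp0 hp1
  have step2 : (X + c) ^ p ≤ S ^ p :=
    Real.rpow_le_rpow (add_nonneg hXnonneg hcnonneg) hXc (le_of_lt hp0)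
  have step3 : S ^ p ≤ ((1 - t) * dist (γ 0) z ^ 2) ^ p + (t * dist (γ 1) z ^ 2) ^ p := by
    rw [hS]
    exact rpow_add_le_add_rpow' (mul_nonneg (by linarith) (sq_nonneg _)) (mul_nonneg ht0 (sq_nonneg _)) (le_of_lt hp0) hp1
  have e0 : ∀ x : M, ∀ y : M, (dist x y ^ 2 : ℝ) ^ p = dist x y ^ α := by
    intro x y
    rw [← Real.rpow_natCast (dist x y) 2, ← Real.rpow_mul dist_nonneg, hp]
    norm_num
    congr 1
    ring
  have e1 : ((1 - t) * dist (γ 0) z ^ 2) ^ p = (1 - t) ^ p * dist (γ 0) z ^ α := by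
    rw [Real.mul_rpow (by linarith) (sq_nonneg _), e0]
  have e2 : (t * dist (γ 1) z ^ 2) ^ p = t ^ p * dist (γ 1) z ^ α := by
    rw [Real.mul_rpow ht0 (sq_nonneg _), e0]
  have eX : X ^ p = dist (γ t) z ^ α := e0 _ _
  have h1δp : (0:ℝ) ≤ (1 + δ) ^ (1 - p) := Real.rpow_nonneg (by linarith) _
  have step2' := mul_le_mul_of_nonneg_left step2 h1δp
  have step3' := mul_le_mul_of_nonneg_left step3 h1δp
  rw [e1, e2] at step3'
  rw [eX] at step1
  linarith
end

section
/- Power transform variance inequality: Let (M,d) be a global NPC space, α ∈ [1,2], and P a Borel probability measure on M with ∫d(x,y)^α dP(y) < ∞ and with Fréchet mean x* for η = d^α. Set F_α(x) = ∫ d(x,y)^α dP(y) and, for x ≠ x*, b_α(x) = sup_{t∈(0,1]} [F_α(γ^x_t) − (t^{α/2}+(1−t)^{α/2})F_α(x*)] / [t^{α/2} d(x,x*)^α], where γ^x:[0,1]→M is the geodesic from x* to x. If b_α(x) > 0 then d(x,x*)^α ≤ (1/b_α(x)) ∫(d(x,y)^α − d(x*,y)^α)dP(y). Consequently, if B_α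 := inf_{x≠x*} b_α(x) > 0, then d(x,x*)^α ≤ (1/B_α) ∫(d(x,y)^α − d(x*,y)^α)dP(y) for all x ∈ M. -/
open MeasureTheory Set Filter

/-- `F_α(x) = ∫ d(x,y)^α dP(y)`. -/
noncomputable def Falpha {M : Type*} [MetricSpace M] [MeasurableSpace M]
    (P : Measure M) (α : ℝ) (x : M) : ℝ :=
  ∫ y, dist x y ^ α ∂P

/-- `b_α(x)`, the supremum over `t ∈ (0,1]` along the geodesic `γˣ` from `x*` to `x`. -/
noncomputable def bAlpha {M : Type*} [MetricSpace M] [MeasurableSpace M]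
    (P : Measure M) (α : ℝ) (xstar : M) (γ : M → ℝ → M) (x : M) : ℝ :=
  sSup {v : ℝ | ∃ t ∈ Set.Ioc (0 : ℝ) 1,
    v = (Falpha P α (γ x t) - (t ^ (α / 2) + (1 - t) ^ (α / 2)) * Falpha P α xstar) /
      (t ^ (α / 2) * dist x xstar ^ α)}

lemma npc_midpoint {M : Type*} [MetricSpace M] (hM : IsNPC M) {p q m : M}
    (hp : dist m p = dist p q / 2) (hq : dist m q = dist p q / 2) (z : M) :
    dist z m ^ 2 ≤ (1/2) * dist z p ^ 2 + (1/2) * dist z q ^ 2 - (1/4) * dist p q ^ 2 := by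
  obtain ⟨y, hy⟩ := hM p q
  have hm := hy m
  rw [hp, hq] at hm
  have h0 : dist m y ^ 2 ≤ 0 := by nlinarith
  have : dist m y = 0 := by nlinarith [dist_nonneg (x := m) (y := y), sq_nonneg (dist m y)]
  have : m = y := by rwa [dist_eq_zero] at this
  rw [this]; exact hy z

lemma geodesic_convex {M : Type*} [MetricSpace M] (hM : IsNPC M) {γ : ℝ → M}
    (hγ : IsGeodesic γ) :
    ∀ t ∈ Icc (0:ℝ) 1, ∀ z : M,
      dist z (γ t) ^ 2 ≤ (1 - t) * dist z (γ 0) ^ 2 + t * dist z (γ 1) ^ 2 := by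
  have key : ∀ n : ℕ, ∀ k : ℕ, k ≤ 2 ^ n → ∀ z : M,
      dist z (γ ((k : ℝ) / 2 ^ n)) ^ 2 ≤
        (1 - (k : ℝ) / 2 ^ n) * dist z (γ 0) ^ 2 + ((k : ℝ) / 2 ^ n) * dist z (γ 1) ^ 2 := by
    intro n
    induction n with
    | zero =>
      intro k hk z
      interval_cases k
      · norm_num
      · norm_num
    | succ n ih =>
      intro k hk z
      rcases Nat.even_or_odd k with ⟨j, hj⟩ | ⟨j, hj⟩
      · have hj' : j ≤ 2 ^ n := by omega
        have heq : (k : ℝ) / 2 ^ (n+1) = (j : ℝ) / 2 ^ n := by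
          subst hj; push_cast; rw [pow_succ]; ring
        rw [heq]; exact ih j hj' z
      · have hj1 : j + 1 ≤ 2 ^ n := by omega
        have hj0 : j ≤ 2 ^ n := by omega
        have h2n : (0:ℝ) < 2 ^ n := by positivity
        set s : ℝ := (j : ℝ) / 2 ^ n with hs
        set t : ℝ := ((j : ℝ) + 1) / 2 ^ n with ht
        have hsmem : s ∈ Icc (0:ℝ) 1 :=
          ⟨by positivity, by rw [hs, div_le_one h2n]; exact_mod_cast hj0⟩
        have htmem : t ∈ Icc (0:ℝ) 1 := by
          refine ⟨by positivity, ?_⟩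
          rw [ht, div_le_one h2n]
          have : ((j:ℝ) + 1) = ((j + 1 : ℕ) : ℝ) := by push_cast; ring
          rw [this]; exact_mod_cast hj1
        have hts : t - s = 1 / 2 ^ n := by rw [ht, hs, div_sub_div_same]; norm_num
        have hmval : (k : ℝ) / 2 ^ (n+1) = (s + t) / 2 := by
          subst hj; rw [hs, ht]; push_cast; rw [pow_succ]; ring
        have hpos : (0:ℝ) < 1 / 2 ^ n := by positivity
        have hmmem : (s + t) / 2 ∈ Icc (0:ℝ) 1 :=
          ⟨by linarith [hsmem.1, htmem.1], by linarith [hsmem.2, htmem.2]⟩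
        have hdst : dist (γ s) (γ t) = |s - t| * dist (γ 0) (γ 1) := hγ s hsmem t htmem
        have habs : |s - t| = 1 / 2 ^ n := by
          rw [abs_of_nonpos (by linarith)]; linarith
        have hdms : dist (γ ((s + t)/2)) (γ s) = dist (γ s) (γ t) / 2 := by
          rw [hγ ((s+t)/2) hmmem s hsmem, hdst, habs]
          have : |(s + t)/2 - s| = (1 / 2 ^ n) / 2 := by
            rw [abs_of_nonneg (by linarith)]; linarith
          rw [this]; ring
        have hdmt : dist (γ ((s + t)/2)) (γ t) = dist (γ s) (γ t) / 2 := by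
          rw [hγ ((s+t)/2) hmmem t htmem, hdst, habs]
          have : |(s + t)/2 - t| = (1 / 2 ^ n) / 2 := by
            rw [abs_of_nonpos (by linarith)]; linarith
          rw [this]; ring
        have hmid := npc_midpoint hM hdms hdmt z
        have hihs := ih j hj0 z
        have hiht := ih (j+1) hj1 z
        rw [← hs] at hihs
        have hiht' : dist z (γ t) ^ 2 ≤ (1 - t) * dist z (γ 0) ^ 2 + t * dist z (γ 1) ^ 2 := by
          have heq : ((j + 1 : ℕ) : ℝ) / 2 ^ n = t := by rw [ht]; push_cast; ring
          rwa [heq] at hiht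
        rw [hmval]
        nlinarith [sq_nonneg (dist (γ s) (γ t))]
  -- limit step
  intro t ht z
  set a := dist z (γ 0) with ha
  set b := dist z (γ 1) with hb
  have hnn : 0 ≤ (1 - t) * a ^ 2 + t * b ^ 2 := by
    nlinarith [ht.1, ht.2, sq_nonneg a, sq_nonneg b]
  set q : ℕ → ℝ := fun n => (⌊t * 2 ^ n⌋₊ : ℝ) / 2 ^ n with hq
  have hqmem : ∀ n, q n ∈ Icc (0:ℝ) 1 ∧ ⌊t * 2 ^ n⌋₊ ≤ 2 ^ n := by
    intro n
    have h2n : (0:ℝ) < 2 ^ n := by positivity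
    have htn : (0:ℝ) ≤ t * 2 ^ n := mul_nonneg ht.1 h2n.le
    have hfl : (⌊t * 2 ^ n⌋₊ : ℝ) ≤ t * 2 ^ n := Nat.floor_le htn
    have hk : ⌊t * 2 ^ n⌋₊ ≤ 2 ^ n := by
      have h1 : t * 2 ^ n ≤ ((2 ^ n : ℕ) : ℝ) := by push_cast; nlinarith [ht.2]
      calc ⌊t * 2 ^ n⌋₊ ≤ ⌊((2 ^ n : ℕ) : ℝ)⌋₊ := Nat.floor_le_floor h1
        _ = 2 ^ n := Nat.floor_natCast _
    refine ⟨⟨by positivity, ?_⟩, hk⟩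
    rw [hq]; simp only
    rw [div_le_one h2n]
    calc (⌊t * 2 ^ n⌋₊ : ℝ) ≤ t * 2 ^ n := hfl
      _ ≤ 2 ^ n := by nlinarith [ht.2]
  have hqle : ∀ n, dist z (γ (q n)) ≤ Real.sqrt ((1 - q n) * a ^ 2 + q n * b ^ 2) := by
    intro n
    have hmem := (hqmem n).1
    rw [Real.le_sqrt dist_nonneg (by nlinarith [hmem.1, hmem.2, sq_nonneg a, sq_nonneg b])]
    exact key n ⌊t * 2 ^ n⌋₊ (hqmem n).2 z
  have hqdist : ∀ n, dist (q n) t ≤ (1/2) ^ n := by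
    intro n
    have h2n : (0:ℝ) < 2 ^ n := by positivity
    have htn : (0:ℝ) ≤ t * 2 ^ n := mul_nonneg ht.1 h2n.le
    have hfl : (⌊t * 2 ^ n⌋₊ : ℝ) ≤ t * 2 ^ n := Nat.floor_le htn
    have hfl2 : t * 2 ^ n < (⌊t * 2 ^ n⌋₊ : ℝ) + 1 := Nat.lt_floor_add_one _
    have hge : q n ≤ t := by rw [hq]; simp only; rw [div_le_iff₀ h2n]; exact hfl
    have hle : t - q n ≤ 1 / 2 ^ n := by
      rw [hq]; simp only
      rw [sub_le_iff_le_add, ← add_div, le_div_iff₀ h2n]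
      linarith
    rw [Real.dist_eq, abs_of_nonpos (by linarith), div_pow]
    rw [one_pow]
    linarith
  have hqtend : Tendsto q atTop (nhds t) := by
    rw [tendsto_iff_dist_tendsto_zero]
    exact squeeze_zero (fun n => dist_nonneg) hqdist
      (tendsto_pow_atTop_nhds_zero_of_lt_one (by norm_num) (by norm_num))
  have h1 : Tendsto (fun n => (1 - q n) * a ^ 2 + q n * b ^ 2) atTop
      (nhds ((1 - t) * a ^ 2 + t * b ^ 2)) :=
    ((tendsto_const_nhds.sub hqtend).mul tendsto_const_nhds).add
      (hqtend.mul tendsto_const_nhds)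
  have h2 := h1.sqrt
  have h3 : Tendsto (fun n => dist (q n) t * dist (γ 0) (γ 1)) atTop (nhds 0) := by
    have := (tendsto_iff_dist_tendsto_zero.mp hqtend).mul_const (dist (γ 0) (γ 1))
    rwa [zero_mul] at this
  have h4 : Tendsto (fun n => Real.sqrt ((1 - q n) * a ^ 2 + q n * b ^ 2)
      + dist (q n) t * dist (γ 0) (γ 1)) atTop
      (nhds (Real.sqrt ((1 - t) * a ^ 2 + t * b ^ 2))) := by
    have := h2.add h3
    rwa [add_zero] at this
  have hbound : ∀ n, dist z (γ t) ≤ Real.sqrt ((1 - q n) * a ^ 2 + q n * b ^ 2)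
      + dist (q n) t * dist (γ 0) (γ 1) := by
    intro n
    have hd : dist (γ (q n)) (γ t) = |q n - t| * dist (γ 0) (γ 1) :=
      hγ (q n) (hqmem n).1 t ht
    calc dist z (γ t) ≤ dist z (γ (q n)) + dist (γ (q n)) (γ t) := dist_triangle _ _ _
      _ = dist z (γ (q n)) + dist (q n) t * dist (γ 0) (γ 1) := by
          rw [hd, Real.dist_eq]
      _ ≤ _ := add_le_add_left (hqle n) _
  have hfin : dist z (γ t) ≤ Real.sqrt ((1 - t) * a ^ 2 + t * b ^ 2) :=
    ge_of_tendsto' h4 hbound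
  calc dist z (γ t) ^ 2 ≤ Real.sqrt ((1 - t) * a ^ 2 + t * b ^ 2) ^ 2 :=
        pow_le_pow_left₀ dist_nonneg hfin 2
    _ = (1 - t) * a ^ 2 + t * b ^ 2 := Real.sq_sqrt hnn

lemma real_add_rpow_le {u v p : ℝ} (hu : 0 ≤ u) (hv : 0 ≤ v) (hp0 : 0 ≤ p) (hp1 : p ≤ 1) :
    (u + v) ^ p ≤ u ^ p + v ^ p := by
  rw [← Real.coe_toNNReal u hu, ← Real.coe_toNNReal v hv, ← NNReal.coe_add,
    ← NNReal.coe_rpow, ← NNReal.coe_rpow, ← NNReal.coe_rpow, ← NNReal.coe_add]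
  exact_mod_cast NNReal.rpow_add_le_add_rpow _ _ hp0 hp1

lemma rpow_convex_aux {a b c t α : ℝ} (ha : 0 ≤ a) (hb : 0 ≤ b) (hc : 0 ≤ c)
    (ht0 : 0 ≤ t) (ht1 : t ≤ 1) (hα1 : 1 ≤ α) (hα2 : α ≤ 2)
    (h : c ^ 2 ≤ (1 - t) * a ^ 2 + t * b ^ 2) :
    c ^ α ≤ (1 - t) ^ (α / 2) * a ^ α + t ^ (α / 2) * b ^ α := by
  have hp0 : (0:ℝ) ≤ α / 2 := by linarith
  have hp1 : α / 2 ≤ 1 := by linarith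
  have e : ∀ x : ℝ, 0 ≤ x → (x ^ 2) ^ (α / 2) = x ^ α := by
    intro x hx
    rw [← Real.rpow_natCast x 2, ← Real.rpow_mul hx, show ((2:ℕ):ℝ) * (α/2) = α by push_cast; ring]
  have step1 : (c ^ 2) ^ (α / 2) ≤ ((1 - t) * a ^ 2 + t * b ^ 2) ^ (α / 2) :=
    Real.rpow_le_rpow (sq_nonneg c) h hp0
  have step2 : ((1 - t) * a ^ 2 + t * b ^ 2) ^ (α / 2) ≤
      ((1 - t) * a ^ 2) ^ (α / 2) + (t * b ^ 2) ^ (α / 2) :=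
    real_add_rpow_le (by nlinarith [sq_nonneg a]) (by positivity) hp0 hp1
  have step3 : ((1 - t) * a ^ 2) ^ (α / 2) = (1 - t) ^ (α / 2) * a ^ α := by
    rw [Real.mul_rpow (by linarith) (sq_nonneg a), e a ha]
  have step4 : (t * b ^ 2) ^ (α / 2) = t ^ (α / 2) * b ^ α := by
    rw [Real.mul_rpow ht0 (sq_nonneg b), e b hb]
  calc c ^ α = (c ^ 2) ^ (α / 2) := (e c hc).symm
    _ ≤ ((1 - t) * a ^ 2 + t * b ^ 2) ^ (α / 2) := step1
    _ ≤ ((1 - t) * a ^ 2) ^ (α / 2) + (t * b ^ 2) ^ (α / 2) := step2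
    _ = (1 - t) ^ (α / 2) * a ^ α + t ^ (α / 2) * b ^ α := by rw [step3, step4]

/-- Power transform variance inequality. -/
theorem stmt_3
    {M : Type*} [MetricSpace M] [CompleteSpace M] [TopologicalSpace.SeparableSpace M]
    [MeasurableSpace M] [BorelSpace M]
    (hM : IsNPC M)
    (α : ℝ) (hα : α ∈ Set.Icc (1 : ℝ) 2)
    (P : Measure M) [IsProbabilityMeasure P]
    (hPα : ∀ x : M, Integrable (fun y => dist x y ^ α) P)
    (xstar : M)
    -- x* is a Fréchet mean for η = dᵅ
    (hmean : ∀ x : M, Falpha P α xstar ≤ Falpha P α x)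
    -- γ x is the geodesic from x* to x
    (γ : M → ℝ → M)
    (hγ : ∀ x : M, IsGeodesic (γ x) ∧ γ x 0 = xstar ∧ γ x 1 = x) :
    (∀ x : M, x ≠ xstar → 0 < bAlpha P α xstar γ x →
      dist x xstar ^ α ≤
        (1 / bAlpha P α xstar γ x) * ∫ y, (dist x y ^ α - dist xstar y ^ α) ∂P) ∧
    (0 < sInf {b : ℝ | ∃ x : M, x ≠ xstar ∧ b = bAlpha P α xstar γ x} →
      ∀ x : M,
        dist x xstar ^ α ≤
          (1 / sInf {b : ℝ | ∃ x : M, x ≠ xstar ∧ b = bAlpha P α xstar γ x}) *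
            ∫ y, (dist x y ^ α - dist xstar y ^ α) ∂P) := by
  obtain ⟨hα1, hα2⟩ := hα
  have hα0 : (0:ℝ) < α := by linarith
  have hppos : (0:ℝ) < α / 2 := by linarith
  -- integral of difference
  have hint : ∀ x : M, ∫ y, (dist x y ^ α - dist xstar y ^ α) ∂P
      = Falpha P α x - Falpha P α xstar := fun x => integral_sub (hPα x) (hPα xstar)
  -- convexity of F along each geodesic
  have hF : ∀ x : M, ∀ t ∈ Ioc (0:ℝ) 1, Falpha P α (γ x t) ≤
      (1 - t) ^ (α/2) * Falpha P α xstar + t ^ (α/2) * Falpha P α x := by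
    intro x t ht
    obtain ⟨hg, hg0, hg1⟩ := hγ x
    have hconv := geodesic_convex hM hg t ⟨ht.1.le, ht.2⟩
    have hpt : ∀ y : M, dist (γ x t) y ^ α ≤
        (1 - t) ^ (α/2) * dist xstar y ^ α + t ^ (α/2) * dist x y ^ α := by
      intro y
      have h := hconv y
      rw [hg0, hg1] at h
      rw [dist_comm (γ x t) y, dist_comm xstar y, dist_comm x y]
      exact rpow_convex_aux dist_nonneg dist_nonneg dist_nonneg ht.1.le ht.2 hα1 hα2 h
    have hI : Integrable (fun y =>
        (1 - t) ^ (α/2) * dist xstar y ^ α + t ^ (α/2) * dist x y ^ α) P :=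
      ((hPα xstar).const_mul _).add ((hPα x).const_mul _)
    calc Falpha P α (γ x t) = ∫ y, dist (γ x t) y ^ α ∂P := rfl
      _ ≤ ∫ y, ((1 - t) ^ (α/2) * dist xstar y ^ α + t ^ (α/2) * dist x y ^ α) ∂P :=
          integral_mono (hPα _) hI hpt
      _ = (1 - t) ^ (α/2) * Falpha P α xstar + t ^ (α/2) * Falpha P α x := by
          rw [integral_add ((hPα xstar).const_mul _) ((hPα x).const_mul _),
            integral_const_mul, integral_const_mul]
          rfl
  -- value of bAlpha
  have hBval : ∀ x : M, x ≠ xstar →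
      bAlpha P α xstar γ x = (Falpha P α x - Falpha P α xstar) / dist x xstar ^ α := by
    intro x hx
    have hDpos : 0 < dist x xstar := dist_pos.mpr hx
    have hDa : 0 < dist x xstar ^ α := Real.rpow_pos_of_pos hDpos α
    apply IsGreatest.csSup_eq
    constructor
    · refine ⟨1, ⟨zero_lt_one, le_refl 1⟩, ?_⟩
      obtain ⟨hg, hg0, hg1⟩ := hγ x
      rw [hg1, Real.one_rpow, sub_self, Real.zero_rpow (ne_of_gt hppos), one_mul,
        add_zero, one_mul]
    · rintro v ⟨t, ht, rfl⟩
      have hF' := hF x t ht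
      have htp : 0 < t ^ (α/2) := Real.rpow_pos_of_pos ht.1 _
      rw [div_le_div_iff₀ (by positivity) hDa]
      nlinarith [hF', htp, hDa]
  refine ⟨?_, ?_⟩
  · intro x hx hb
    rw [hint x]
    rw [hBval x hx] at hb ⊢
    have hDpos : 0 < dist x xstar := dist_pos.mpr hx
    have hDa : 0 < dist x xstar ^ α := Real.rpow_pos_of_pos hDpos α
    have hΔ : 0 < Falpha P α x - Falpha P α xstar := by
      by_contra hcon
      push_neg at hcon
      have : (Falpha P α x - Falpha P α xstar) / dist x xstar ^ α ≤ 0 :=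
        div_nonpos_of_nonpos_of_nonneg hcon hDa.le
      linarith
    have : (1 / ((Falpha P α x - Falpha P α xstar) / dist x xstar ^ α)) *
        (Falpha P α x - Falpha P α xstar) = dist x xstar ^ α := by
      field_simp
    rw [this]
  · intro hB x
    set S := {b : ℝ | ∃ x : M, x ≠ xstar ∧ b = bAlpha P α xstar γ x} with hS
    by_cases hx : x = xstar
    · subst hx
      rw [dist_self, Real.zero_rpow (ne_of_gt hα0)]
      have : ∫ y, (dist x y ^ α - dist x y ^ α) ∂P = 0 := by simp
      rw [this, mul_zero]
    · have hDpos : 0 < dist x xstar := dist_pos.mpr hx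
      have hDa : 0 < dist x xstar ^ α := Real.rpow_pos_of_pos hDpos α
      have hbx : bAlpha P α xstar γ x ∈ S := ⟨x, hx, rfl⟩
      have hSbdd : BddBelow S := by
        refine ⟨0, ?_⟩
        rintro b ⟨x', hx', rfl⟩
        rw [hBval x' hx']
        exact div_nonneg (sub_nonneg.mpr (hmean x')) (Real.rpow_nonneg dist_nonneg α)
      have hle : sInf S ≤ bAlpha P α xstar γ x := csInf_le hSbdd hbx
      rw [hBval x hx] at hle
      rw [hint x]
      rw [one_div, ← div_eq_inv_mul, le_div_iff₀ hB]
      have h1 : sInf S * dist x xstar ^ α ≤ Falpha P α x - Falpha P α xstar := by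
        rw [← le_div_iff₀ hDa]; exact hle
      nlinarith
end
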